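/- A finite group G is autonilpotent if and only if G is nilpotent (equivalently, G is the internal direct product of its Sylow subgroups) and, for every prime p dividing |G|, the automorphism group Aut P of a Sylow p-subgroup P of G is a p-group. -/

import Mathlib

/-- The autocommutator `[x, α] = x⁻¹ · α(x)`. -/
def autoComm {G : Type*} [Group G] (x : G) (α : MulAut G) : G := x⁻¹ * α x

/-- `autoL G n = Lₙ(G)`: elements `x` with `[x, α₁, …, αₙ] = 1` for all `α₁, …, αₙ ∈ Aut G`. -/
def autoL (G : Type*) [Group G] (n : ℕ) : Set G :=
  {x | ∀ l : List (MulAut G), l.length = n → l.foldl autoComm x = 1}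

/-- A group is autonilpotent if `G = Lₙ(G)` for some `n`. -/
def Autonilpotent (G : Type*) [Group G] : Prop := ∃ n : ℕ, ∀ x : G, x ∈ autoL G n

universe u

section Basic
variable {G : Type*} [Group G]

@[simp] lemma autoComm_one (α : MulAut G) : autoComm (1 : G) α = 1 := by
  simp [autoComm]

lemma foldl_autoComm_one (l : List (MulAut G)) : l.foldl autoComm (1 : G) = 1 := by
  induction l with
  | nil => rfl
  | cons a l ih => simpa [autoComm] using ih

lemma dies_of_le {x : G} {n m : ℕ} (h : n ≤ m)
    (hd : ∀ l : List (MulAut G), l.length = n → l.foldl autoComm x = 1) :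
    ∀ l : List (MulAut G), l.length = m → l.foldl autoComm x = 1 := by
  intro l hl
  have h1 : l = l.take n ++ l.drop n := (List.take_append_drop n l).symm
  rw [h1, List.foldl_append, hd _ (by simp [hl, h]), foldl_autoComm_one]

lemma char_mem_iff (H : Subgroup G) [h : H.Characteristic] (α : MulAut G) (x : G) :
    α x ∈ H ↔ x ∈ H := by
  conv_rhs => rw [← h.fixed α]
  simp [Subgroup.mem_comap]

/-- Restriction of an automorphism to an invariant subgroup. -/
def autRestr (α : MulAut G) (H : Subgroup G) (h : ∀ x : G, α x ∈ H ↔ x ∈ H) : MulAut H where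
  toFun x := ⟨α x, (h x).2 x.2⟩
  invFun x := ⟨α⁻¹ x, by
    have := (h (α⁻¹ (x : G))).1
    simp only [MulAut.apply_inv_self] at this
    exact this x.2⟩
  left_inv x := by ext; simp
  right_inv x := by ext; simp
  map_mul' x y := by ext; simp

@[simp] lemma autRestr_coe (α : MulAut G) (H : Subgroup G) (h) (x : H) :
    (autRestr α H h x : G) = α x := rfl

lemma mulAut_pow_apply (α : MulAut G) (k : ℕ) (x : G) :
    (α ^ (k + 1)) x = (α ^ k) (α x) := by
  rw [pow_succ]; rfl

lemma autRestr_pow_coe (α : MulAut G) (H : Subgroup G) (h) (k : ℕ) (x : H) :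
    ((autRestr α H h ^ k) x : G) = (α ^ k) (x : G) := by
  induction k generalizing x with
  | zero => simp
  | succ k ih => rw [mulAut_pow_apply, mulAut_pow_apply, ← autRestr_coe α H h x, ih]

lemma autoComm_mem (A : Subgroup G) [A.Characteristic] {x : G} (hx : x ∈ A) (α : MulAut G) :
    autoComm x α ∈ A :=
  A.mul_mem (A.inv_mem hx) ((char_mem_iff A α x).2 hx)

lemma foldl_mem (A : Subgroup G) [A.Characteristic] {x : G} (hx : x ∈ A)
    (l : List (MulAut G)) : l.foldl autoComm x ∈ A := by
  induction l generalizing x with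
  | nil => exact hx
  | cons α l ih => exact ih (autoComm_mem A hx α)

lemma foldl_mul (A B : Subgroup G) [A.Characteristic] [B.Characteristic]
    (hAB : ∀ a ∈ A, ∀ b ∈ B, Commute a b) {x y : G} (hx : x ∈ A) (hy : y ∈ B)
    (l : List (MulAut G)) :
    l.foldl autoComm (x * y) = l.foldl autoComm x * l.foldl autoComm y := by
  induction l generalizing x y with
  | nil => rfl
  | cons α l ih =>
    rw [List.foldl_cons, List.foldl_cons, List.foldl_cons,
      ← ih (autoComm_mem A hx α) (autoComm_mem B hy α)]
    congr 1
    show (x * y)⁻¹ * α (x * y) = (x⁻¹ * α x) * (y⁻¹ * α y)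
    rw [map_mul, mul_inv_rev]
    have hc : Commute (x⁻¹ * α x) y⁻¹ :=
      (hAB _ (A.mul_mem (A.inv_mem hx) ((char_mem_iff A α x).2 hx)) _ (B.inv_mem hy))
    calc y⁻¹ * x⁻¹ * (α x * α y) = y⁻¹ * (x⁻¹ * α x) * α y := by group
    _ = (x⁻¹ * α x) * y⁻¹ * α y := by rw [hc.symm.eq]
    _ = (x⁻¹ * α x) * (y⁻¹ * α y) := by group

lemma foldl_restr (H : Subgroup G) [H.Characteristic] (x : H) (l : List (MulAut G)) :
    l.foldl autoComm (x : G) =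
      ((l.map (fun α => autRestr α H (char_mem_iff H α))).foldl autoComm x : H) := by
  induction l generalizing x with
  | nil => rfl
  | cons α l ih =>
    rw [List.foldl_cons, List.map_cons, List.foldl_cons]
    exact ih (autoComm x (autRestr α H (char_mem_iff H α)))

lemma dies_of_subgroup (H : Subgroup G) [H.Characteristic] (n : ℕ)
    (hH : ∀ (y : H) (l' : List (MulAut H)), l'.length = n → l'.foldl autoComm y = 1)
    {x : G} (hx : x ∈ H) : ∀ l : List (MulAut G), l.length = n → l.foldl autoComm x = 1 := by
  intro l hl
  have h1 := foldl_restr H ⟨x, hx⟩ l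
  rw [hH _ _ (by simpa using hl)] at h1
  simpa using h1

lemma iSup_characteristic {ι : Sort*} (K : ι → Subgroup G) [∀ i, (K i).Characteristic] :
    (⨆ i, K i).Characteristic := by
  rw [Subgroup.characteristic_iff_map_eq]
  intro φ
  rw [Subgroup.map_iSup]
  congr 1
  funext i
  exact Subgroup.characteristic_iff_map_eq.mp inferInstance φ

lemma dies_noncommProd {ι : Type*} [DecidableEq ι] (N : ℕ) (K : ι → Subgroup G)
    [∀ i, (K i).Characteristic]
    (hcomm : ∀ i j, i ≠ j → ∀ a ∈ K i, ∀ b ∈ K j, Commute a b)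
    (f : ι → G) (hf : ∀ i, f i ∈ K i)
    (hd : ∀ i, ∀ l : List (MulAut G), l.length = N → l.foldl autoComm (f i) = 1) :
    ∀ (s : Finset ι) (hc : (s : Set ι).Pairwise (fun a b => Commute (f a) (f b)))
      (l : List (MulAut G)), l.length = N → l.foldl autoComm (s.noncommProd f hc) = 1 := by
  intro s
  induction s using Finset.induction_on with
  | empty =>
    intro hc l hl
    rw [Finset.noncommProd_empty]
    exact foldl_autoComm_one l
  | @insert i s hi ih =>
    intro hc l hl
    rw [Finset.noncommProd_insert_of_notMem _ _ _ _ hi]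
    set B : Subgroup G := ⨆ j : {j // j ∈ s}, K j with hB
    haveI hBchar : B.Characteristic := iSup_characteristic _
    have hrest : ∀ hc2 : (s : Set ι).Pairwise fun a b => Commute (f a) (f b),
        s.noncommProd f hc2 ∈ B := by
      intro hc2
      exact Submonoid.noncommProd_mem B.toSubmonoid s f hc2
        (fun j hj => Subgroup.mem_iSup_of_mem ⟨j, hj⟩ (hf j))
    have hABcomm : ∀ a ∈ K i, ∀ b ∈ B, Commute a b := by
      intro a ha b hb
      refine Subgroup.iSup_induction _ (C := fun b => Commute a b) hb ?_ ?_ ?_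
      · rintro ⟨j, hj⟩ y hy
        exact hcomm i j (fun h => hi (h ▸ hj)) a ha y hy
      · exact Commute.one_right a
      · intro y z hy hz
        exact hy.mul_right hz
    rw [foldl_mul (K i) B hABcomm (hf i) (hrest _) l, hd i l hl, one_mul]
    exact ih _ l hl

end Basic

section Quot
variable {G : Type*} [Group G]

/-- Induced automorphism on the quotient by an invariant normal subgroup. -/
def autQuot (α : MulAut G) (N : Subgroup G) [N.Normal] (h : ∀ x : G, α x ∈ N ↔ x ∈ N) :
    MulAut (G ⧸ N) where
  toFun := QuotientGroup.map N N α.toMonoidHom (fun x hx => by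
    simpa [Subgroup.mem_comap] using (h x).2 hx)
  invFun := QuotientGroup.map N N (α⁻¹ : MulAut G).toMonoidHom (fun x hx => by
    have := (h (α⁻¹ x)).1
    simp only [MulAut.apply_inv_self] at this
    simpa [Subgroup.mem_comap] using this hx)
  left_inv q := by
    induction q using QuotientGroup.induction_on with
    | H x => simp [QuotientGroup.map_mk]
  right_inv q := by
    induction q using QuotientGroup.induction_on with
    | H x => simp [QuotientGroup.map_mk]
  map_mul' x y := by simp

@[simp] lemma autQuot_mk (α : MulAut G) (N : Subgroup G) [N.Normal] (h) (x : G) :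
    autQuot α N h ((x : G ⧸ N)) = ((α x : G) : G ⧸ N) := rfl

lemma autQuot_pow_mk (α : MulAut G) (N : Subgroup G) [N.Normal] (h) (k : ℕ) (x : G) :
    (autQuot α N h ^ k) ((x : G ⧸ N)) = (((α ^ k) x : G) : G ⧸ N) := by
  induction k generalizing x with
  | zero => simp
  | succ k ih =>
    have h1 : (autQuot α N h ^ (k+1)) ((x : G ⧸ N)) =
        (autQuot α N h ^ k) (autQuot α N h (x : G ⧸ N)) := by rw [pow_succ]; rfl
    rw [h1, autQuot_mk, ih, pow_succ]; rfl

end Quot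

section helpers
variable {A : Type*} [Group A]

lemma eq_one_of_pow_coprime {x : A} {p q k : ℕ} (hp : p.Prime) (hq : q.Prime) (hne : q ≠ p)
    (h1 : x ^ q = 1) (h2 : x ^ p ^ k = 1) : x = 1 := by
  have ho1 : orderOf x ∣ q := orderOf_dvd_of_pow_eq_one h1
  have ho2 : orderOf x ∣ p ^ k := orderOf_dvd_of_pow_eq_one h2
  have hco : Nat.Coprime q (p ^ k) := ((Nat.coprime_primes hq hp).2 hne).pow_right _
  have : orderOf x = 1 := Nat.eq_one_of_dvd_coprimes hco ho1 ho2
  exact orderOf_eq_one_iff.mp this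

end helpers

lemma engel_abelian : ∀ (n : ℕ) (A : Type u) [CommGroup A] [Finite A] (p q : ℕ),
    p.Prime → q.Prime → q ≠ p → IsPGroup p A → ∀ α : MulAut A,
    α ^ q = 1 → (∀ x : A, (fun y => y⁻¹ * α y)^[n] x = 1) → ∀ x : A, α x = x := by
  intro n
  induction n with
  | zero =>
    intro A _ _ p q hp hq hne hPA α hαq hch x
    have h1 := hch x
    simp only [Function.iterate_zero, id_eq] at h1
    rw [h1, map_one]
  | succ n ih =>
    intro A _ _ p q hp hq hne hPA α hαq hch x
    set φ : A →* A := MonoidHom.mk' (fun y => y⁻¹ * α y) (by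
        intro a b
        simp only [map_mul, mul_inv_rev]
        simp [mul_comm, mul_assoc, mul_left_comm]) with hφ
    have hφ_apply : ∀ y : A, φ y = y⁻¹ * α y := fun y => rfl
    have hφα : ∀ y : A, φ (α y) = α (φ y) := by
      intro y; rw [hφ_apply, hφ_apply, map_mul, map_inv]
    set B := φ.range with hB
    have hinv : ∀ y : A, α y ∈ B ↔ y ∈ B := by
      intro y
      constructor
      · rintro ⟨z, hz⟩
        refine ⟨α⁻¹ z, ?_⟩
        have h3 : φ ((α⁻¹ : MulAut A) z) = (α⁻¹ : MulAut A) (φ z) := by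
          rw [hφ_apply, hφ_apply, map_mul, map_inv]
          simp
        rw [h3, hz]
        simp
      · rintro ⟨z, hz⟩
        exact ⟨α z, by rw [hφα, hz]⟩
    set β := autRestr α B hinv with hβ
    have hβq : β ^ q = 1 := by
      ext b
      have h4 := autRestr_pow_coe α B hinv q b
      rw [hαq] at h4
      simpa using h4
    have hchain : ∀ (k : ℕ) (b : B),
        (((fun y : B => y⁻¹ * β y)^[k] b : B) : A) = (fun y : A => y⁻¹ * α y)^[k] (b : A) := by
      intro k
      induction k with
      | zero => intro b; simp
      | succ k ihk =>
        intro b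
        rw [Function.iterate_succ_apply, Function.iterate_succ_apply, ihk]
        rfl
    have hengel : ∀ b : B, (fun y : B => y⁻¹ * β y)^[n] b = 1 := by
      intro b
      obtain ⟨z, hz⟩ := b.2
      apply Subtype.ext
      rw [hchain n b, ← hz]
      have h5 : (fun y : A => y⁻¹ * α y)^[n] (φ z) = (fun y : A => y⁻¹ * α y)^[n+1] z := by
        rw [Function.iterate_succ_apply]
        rfl
      rw [h5, hch z]
      rfl
    have hfix := ih B p q hp hq hne (hPA.to_subgroup B) β hβq hengel
    have hfixφ : ∀ y : A, α (φ y) = φ y := by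
      intro y
      have h6 := hfix ⟨φ y, ⟨y, rfl⟩⟩
      exact congrArg Subtype.val h6
    have hpow : ∀ (k : ℕ) (y : A), (α ^ k) y = y * (φ y) ^ k := by
      intro k
      induction k with
      | zero => simp
      | succ k ihk =>
        intro y
        rw [mulAut_pow_apply, ihk (α y)]
        have h7 : φ (α y) = φ y := by rw [hφα, hfixφ]
        have h8 : α y = y * φ y := by rw [hφ_apply]; group
        rw [h7, h8, mul_assoc, ← pow_succ']
    have hq1 : (φ x) ^ q = 1 := by
      have h9 := hpow q x
      rw [hαq] at h9
      simp only [MulAut.one_apply] at h9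
      exact (left_eq_mul.mp h9)
    obtain ⟨k, hk⟩ := hPA (φ x)
    have h10 := eq_one_of_pow_coprime hp hq hne hq1 hk
    have h11 : α x = x * φ x := by rw [hφ_apply]; group
    rw [h11, h10, mul_one]



lemma engel_pGroup : ∀ (N : ℕ) (P : Type u) [Group P] [Finite P], Nat.card P ≤ N →
    ∀ (p q : ℕ), p.Prime → q.Prime → q ≠ p → IsPGroup p P → ∀ (α : MulAut P) (n : ℕ),
    α ^ q = 1 → (∀ x : P, (fun y => y⁻¹ * α y)^[n] x = 1) → α = 1 := by
  intro N
  induction N with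
  | zero =>
    intro P _ _ hcard
    exact absurd hcard (by simpa using Nat.card_pos.ne')
  | succ N ihN =>
    intro P _ _ hcard p q hp hq hne hPP α n hαq hch
    rcases subsingleton_or_nontrivial P with hsub | hnt
    · ext x; simp [Subsingleton.elim x 1]
    · haveI : Fact p.Prime := ⟨hp⟩
      set Z := Subgroup.center P with hZ
      have hZchar : Z.Characteristic := Subgroup.centerCharacteristic
      have hinvZ : ∀ x : P, α x ∈ Z ↔ x ∈ Z := by
        intro x
        conv_rhs => rw [← hZchar.fixed α]
        simp [Subgroup.mem_comap]
      -- α is trivial on the center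
      have hfixZ : ∀ z : P, z ∈ Z → α z = z := by
        have hres := open scoped IsMulCommutative in engel_abelian n Z p q hp hq hne (hPP.to_subgroup Z)
          (autRestr α Z hinvZ) (by
            ext z
            have h4 := autRestr_pow_coe α Z hinvZ q z
            rw [hαq] at h4
            simpa using h4)
          (by
            intro z
            apply Subtype.ext
            have hchain : ∀ (k : ℕ) (b : Z),
                (((fun y : Z => y⁻¹ * (autRestr α Z hinvZ) y)^[k] b : Z) : P)
                  = (fun y : P => y⁻¹ * α y)^[k] (b : P) := by
              intro k
              induction k with
              | zero => intro b; simp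
              | succ k ihk =>
                intro b
                rw [Function.iterate_succ_apply, Function.iterate_succ_apply, ihk]
                rfl
            rw [hchain n z, hch]
            rfl)
        intro z hz
        have := hres ⟨z, hz⟩
        exact congrArg Subtype.val this
      -- the induced automorphism on the quotient is trivial
      haveI : Nontrivial Z := hPP.center_nontrivial
      have hcardQ : Nat.card (P ⧸ Z) ≤ N := by
        have h1 : Nat.card P = Nat.card (P ⧸ Z) * Nat.card Z :=
          Subgroup.card_eq_card_quotient_mul_card_subgroup Z
        have h2 : 2 ≤ Nat.card Z := Finite.one_lt_card_iff_nontrivial.mpr ‹Nontrivial Z›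
        have h3 : Nat.card (P ⧸ Z) * 2 ≤ Nat.card (P ⧸ Z) * Nat.card Z :=
          Nat.mul_le_mul_left _ h2
        have h4 : 0 < Nat.card (P ⧸ Z) := Nat.card_pos
        omega
      have hquot := ihN (P ⧸ Z) hcardQ p q hp hq hne (hPP.to_quotient Z)
        (autQuot α Z hinvZ) n
        (by
          ext y
          induction y using QuotientGroup.induction_on with
          | H x =>
            rw [autQuot_pow_mk, hαq]
            simp)
        (by
          intro y
          induction y using QuotientGroup.induction_on with
          | H x =>
            have hchainQ : ∀ (k : ℕ) (x : P),
                (fun y : P ⧸ Z => y⁻¹ * (autQuot α Z hinvZ) y)^[k] ((x : P ⧸ Z))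
                  = (((fun y : P => y⁻¹ * α y)^[k] x : P) : P ⧸ Z) := by
              intro k
              induction k with
              | zero => intro x; simp
              | succ k ihk =>
                intro x
                rw [Function.iterate_succ_apply, Function.iterate_succ_apply, ← ihk]
                rfl
            rw [hchainQ n x, hch]
            rfl)
      -- hence every autocommutator is central
      have hφZ : ∀ x : P, x⁻¹ * α x ∈ Z := by
        intro x
        have h5 : (autQuot α Z hinvZ) ((x : P ⧸ Z)) = ((x : P) : P ⧸ Z) := by rw [hquot]; simp
        rw [autQuot_mk] at h5
        exact (QuotientGroup.eq).mp h5.symm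
      -- conclude
      ext x
      have hfixφ : ∀ y : P, α (y⁻¹ * α y) = y⁻¹ * α y := fun y => hfixZ _ (hφZ y)
      have hpow : ∀ (k : ℕ) (y : P), (α ^ k) y = y * (y⁻¹ * α y) ^ k := by
        intro k
        induction k with
        | zero => simp
        | succ k ihk =>
          intro y
          rw [mulAut_pow_apply, ihk (α y)]
          have h7 : (α y)⁻¹ * α (α y) = y⁻¹ * α y := by
            have h8 : α (y⁻¹ * α y) = (α y)⁻¹ * α (α y) := by
              rw [map_mul, map_inv]
            rw [← h8, hfixφ]
          rw [h7, pow_succ', ← mul_assoc]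
          congr 1
          group
      have hq1 : (x⁻¹ * α x) ^ q = 1 := by
        have h9 := hpow q x
        rw [hαq] at h9
        simp only [MulAut.one_apply] at h9
        exact (left_eq_mul.mp h9)
      obtain ⟨k, hk⟩ := hPP (x⁻¹ * α x)
      have h10 := eq_one_of_pow_coprime hp hq hne hq1 hk
      have h11 : α x = x * (x⁻¹ * α x) := by group
      rw [h11, h10, mul_one]
      simp

section Hol
variable (H : Type*) [Group H]

abbrev Hol := SemidirectProduct H (MulAut H) (MonoidHom.id (MulAut H))

instance [Finite H] : Finite (MulAut H) :=
  Finite.of_injective (fun e => (e : H → H)) (fun _ _ h => by ext x; exact congrFun h x)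

lemma hol_finite [Finite H] : Finite (Hol H) :=
  Finite.of_injective (fun g : Hol H => (g.left, g.right))
    (fun a b h => by
      cases a; cases b
      simp only [Prod.mk.injEq] at h
      simp [h.1, h.2])

lemma hol_isPGroup {p : ℕ} (h1 : IsPGroup p H) (h2 : IsPGroup p (MulAut H)) :
    IsPGroup p (Hol H) := by
  intro g
  obtain ⟨k1, hk1⟩ := h2 g.right
  have h3 : (g ^ p ^ k1).right = 1 := by
    have := map_pow (SemidirectProduct.rightHom : Hol H →* MulAut H) g (p ^ k1)
    simp only [SemidirectProduct.rightHom_eq_right] at this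
    rw [this, hk1]
  obtain ⟨k2, hk2⟩ := h1 ((g ^ p ^ k1).left)
  refine ⟨k1 + k2, ?_⟩
  have h4 : g ^ p ^ k1 = SemidirectProduct.inl ((g ^ p ^ k1).left) := by
    ext
    · simp
    · simp [h3]
  rw [pow_add, pow_mul, h4, ← map_pow, hk2, map_one]

lemma inl_mem_ucs_dies : ∀ (k : ℕ) (x : H),
    (SemidirectProduct.inl x : Hol H) ∈ Subgroup.upperCentralSeries (Hol H) k →
    ∀ l : List (MulAut H), l.length = k → l.foldl autoComm x = 1 := by
  intro k
  induction k with
  | zero =>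
    intro x hx l hl
    rw [upperCentralSeries_zero, Subgroup.mem_bot] at hx
    have hx1 : x = 1 := SemidirectProduct.inl_injective (by rw [hx, map_one])
    rw [List.length_eq_zero_iff] at hl
    rw [hl, hx1]
    rfl
  | succ k ih =>
    intro x hx l hl
    match l with
    | [] => simp at hl
    | α :: l' =>
      rw [List.foldl_cons]
      refine ih (autoComm x α) ?_ l' (by simpa using hl)
      have hx' : (SemidirectProduct.inl x : Hol H)⁻¹ ∈ Subgroup.upperCentralSeries (Hol H) (k+1) :=
        inv_mem hx
      have h5 := (mem_upperCentralSeries_succ_iff).mp hx' (SemidirectProduct.inr α)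
      have h6 : (SemidirectProduct.inl x : Hol H)⁻¹ * SemidirectProduct.inr α *
          ((SemidirectProduct.inl x : Hol H)⁻¹)⁻¹ * (SemidirectProduct.inr α)⁻¹
          = SemidirectProduct.inl (autoComm x α) := by
        rw [inv_inv]
        have h7 : (SemidirectProduct.inl (α x) : Hol H) =
            SemidirectProduct.inr α * SemidirectProduct.inl x * SemidirectProduct.inr α⁻¹ :=
          SemidirectProduct.inl_aut α x
        rw [map_inv] at h7
        rw [mul_assoc, mul_assoc, ← mul_assoc (SemidirectProduct.inr α), ← h7, ← map_inv,
          ← map_mul]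
        rfl
      rw [commutatorElement_def, h6] at h5
      exact h5

lemma hol_dies [Finite H] (hnil : Group.IsNilpotent (Hol H)) :
    ∃ n : ℕ, ∀ (x : H) (l : List (MulAut H)), l.length = n → l.foldl autoComm x = 1 := by
  obtain ⟨n, hn⟩ := (Group.isNilpotent_iff (Hol H)).mp hnil
  exact ⟨n, fun x l hl => inl_mem_ucs_dies H n x (by rw [hn]; trivial) l hl⟩

end Hol


section SylowFacts
variable (G : Type*) [Group G] [Finite G]

/-- The chosen Sylow subgroup for each prime factor. -/
noncomputable def sylSub (q : (Nat.card G).primeFactors) : Subgroup G :=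
  ((default : Sylow q.1 G) : Subgroup G)

lemma sylow_iSup_eq_top : (⨆ q : (Nat.card G).primeFactors, sylSub G q) = ⊤ := by
  set T := ⨆ q : (Nat.card G).primeFactors, sylSub G q with hT
  have h1 : Nat.card T ∣ Nat.card G := T.card_subgroup_dvd_card
  have h2 : Nat.card G ∣ Nat.card T := by
    rw [Nat.dvd_iff_prime_pow_dvd_dvd]
    intro p k hp hpk
    rcases Nat.eq_zero_or_pos k with rfl | hk
    · simpa using Nat.one_dvd _
    have hp' : p.Prime := hp
    haveI : Fact p.Prime := ⟨hp'⟩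
    have hpdvd : p ∣ Nat.card G := dvd_trans (dvd_pow_self p hk.ne') hpk
    have hmem : p ∈ (Nat.card G).primeFactors :=
      Nat.mem_primeFactors.mpr ⟨hp', hpdvd, Nat.card_pos.ne'⟩
    have h3 : p ^ k ∣ Nat.card (default : Sylow p G) :=
      Sylow.pow_dvd_card_of_pow_dvd_card _ hpk
    have h4 : sylSub G ⟨p, hmem⟩ ≤ T := le_iSup _ (⟨p, hmem⟩ : (Nat.card G).primeFactors)
    exact h3.trans (Subgroup.card_dvd_of_le h4)
  have h5 : Nat.card T = Nat.card G := Nat.dvd_antisymm h1 h2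
  exact Subgroup.eq_top_of_card_eq _ h5

lemma sylow_pairwise_commute
    (hn : ∀ (p : ℕ), Fact p.Prime → ∀ P : Sylow p G, (P : Subgroup G).Normal) :
    Pairwise fun q₁ q₂ : (Nat.card G).primeFactors =>
      ∀ x y : G, x ∈ sylSub G q₁ → y ∈ sylSub G q₂ → Commute x y := by
  rintro ⟨p₁, hp₁⟩ ⟨p₂, hp₂⟩ hne
  haveI f1 := Fact.mk (Nat.prime_of_mem_primeFactors hp₁)
  haveI f2 := Fact.mk (Nat.prime_of_mem_primeFactors hp₂)
  have hne' : p₁ ≠ p₂ := by simpa using hne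
  exact Subgroup.commute_of_normal_of_disjoint _ _ (hn p₁ f1 default) (hn p₂ f2 default)
    (IsPGroup.disjoint_of_ne p₁ p₂ hne' _ _
      (default : Sylow p₁ G).isPGroup' (default : Sylow p₂ G).isPGroup')

lemma sylSub_characteristic
    (hn : ∀ (p : ℕ), Fact p.Prime → ∀ P : Sylow p G, (P : Subgroup G).Normal)
    (q : (Nat.card G).primeFactors) : (sylSub G q).Characteristic := by
  haveI := Fact.mk (Nat.prime_of_mem_primeFactors q.2)
  exact Sylow.characteristic_of_normal _ (hn q.1 ‹_› default)

end SylowFacts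

open Pointwise in
theorem autonilpotent_iff_nilpotent_and_aut_sylow_pGroup (G : Type*) [Group G] [Finite G] :
    Autonilpotent G ↔
      Group.IsNilpotent G ∧
        ∀ p : ℕ, p.Prime → p ∣ Nat.card G →
          ∀ P : Sylow p G, IsPGroup p (MulAut (P : Subgroup G)) := by
  constructor
  · rintro ⟨n, hn⟩
    have hLZ : ∀ (k : ℕ) (x : G), x ∈ autoL G k → x ∈ Subgroup.upperCentralSeries G k := by
      intro k
      induction k with
      | zero =>
        intro x hx
        have h1 := hx [] rfl
        simpa [upperCentralSeries_zero, Subgroup.mem_bot] using h1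
      | succ k ih =>
        intro x hx
        rw [mem_upperCentralSeries_succ_iff]
        intro y
        have h1 : autoComm x (MulAut.conj y) ∈ Subgroup.upperCentralSeries G k := by
          refine ih _ ?_
          intro l hl
          have h2 := hx (MulAut.conj y :: l) (by simp [hl])
          rwa [List.foldl_cons] at h2
        have h2 : x⁻¹ * (y * x * y⁻¹) ∈ Subgroup.upperCentralSeries G k := by
          simpa [autoComm, MulAut.conj_apply] using h1
        have h3 := (inferInstance : (Subgroup.upperCentralSeries G k).Normal).conj_mem _ h2 x
        have h4 : x * (x⁻¹ * (y * x * y⁻¹)) * x⁻¹ = (x * y * x⁻¹ * y⁻¹)⁻¹ := by group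
        rw [h4] at h3
        rw [commutatorElement_def]
        exact (Subgroup.inv_mem_iff _).mp h3
    have hnil : Group.IsNilpotent G := ⟨n, by
      rw [eq_top_iff]; intro x _; exact hLZ n x (hn x)⟩
    refine ⟨hnil, ?_⟩
    intro p hp hpdvd P
    haveI hpfact : Fact p.Prime := ⟨hp⟩
    have hnormal : ∀ (p' : ℕ), Fact p'.Prime → ∀ Q : Sylow p' G, (Q : Subgroup G).Normal := by
      have h0 := (isNilpotent_of_finite_tfae (G := G)).out 0 3
      intro p' hp' Q
      exact (h0.mp hnil) p' hp' Q
    haveI hPnormal : (P : Subgroup G).Normal := hnormal p ⟨hp⟩ P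
    haveI hPchar : (P : Subgroup G).Characteristic := Sylow.characteristic_of_normal P hPnormal
    haveI := Sylow.unique_of_normal P hPnormal
    haveI hchar : ∀ q, (sylSub G q).Characteristic := sylSub_characteristic G hnormal
    set H : Subgroup G := (P : Subgroup G) with hHdef
    set K : Subgroup G := ⨆ i : {q : (Nat.card G).primeFactors // (q : ℕ) ≠ p}, sylSub G i.1
      with hKdef
    haveI hKchar : K.Characteristic := iSup_characteristic _
    have hcommPS := sylow_pairwise_commute G hnormal
    have hcomm' : Pairwise fun i j : {q : (Nat.card G).primeFactors // (q : ℕ) ≠ p} =>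
        ∀ x y : G, x ∈ sylSub G i.1 → y ∈ sylSub G j.1 → Commute x y := by
      intro i j hij
      exact hcommPS (fun h => hij (Subtype.ext h))
    have hKcop : ¬ p ∣ Nat.card K := by
      have h1 : Nat.card K ∣
          Nat.card (∀ i : {q : (Nat.card G).primeFactors // (q : ℕ) ≠ p}, sylSub G i.1) := by
        have h3 := Subgroup.card_dvd_of_surjective
          (Subgroup.noncommPiCoprod hcomm').rangeRestrict
          (MonoidHom.rangeRestrict_surjective _)
        rwa [Subgroup.noncommPiCoprod_range] at h3
      intro hpdvdK
      have h4 : Nat.Coprime p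
          (Nat.card (∀ i : {q : (Nat.card G).primeFactors // (q : ℕ) ≠ p}, sylSub G i.1)) := by
        rw [Nat.card_pi]
        apply Nat.Coprime.prod_right
        intro i _
        haveI := Fact.mk (Nat.prime_of_mem_primeFactors i.1.2)
        rw [show Nat.card (sylSub G i.1) = (i.1 : ℕ) ^ (Nat.card G).factorization i.1 from
          Sylow.card_eq_multiplicity _]
        exact Nat.Coprime.pow_right _
          ((Nat.coprime_primes hp (Nat.prime_of_mem_primeFactors i.1.2)).2
            (fun h => i.2 h.symm))
      exact absurd (hpdvdK.trans h1) ((Nat.Prime.coprime_iff_not_dvd hp).mp h4)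
    have hdisj : H ⊓ K = ⊥ := by
      rw [Subgroup.eq_bot_iff_card]
      have h6 : IsPGroup p (H ⊓ K : Subgroup G) := P.isPGroup'.to_le inf_le_left
      obtain ⟨m0, hm0⟩ := IsPGroup.iff_card.mp h6
      rcases Nat.eq_zero_or_pos m0 with rfl | hm0pos
      · simpa using hm0
      · have h7 : Nat.card (H ⊓ K : Subgroup G) ∣ Nat.card K :=
          Subgroup.card_dvd_of_le inf_le_right
        rw [hm0] at h7
        exact absurd ((dvd_pow_self p hm0pos.ne').trans h7) hKcop
    have hdisj' : Disjoint H K := disjoint_iff.mpr hdisj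
    have hsupHK : H ⊔ K = ⊤ := by
      rw [eq_top_iff, ← sylow_iSup_eq_top G]
      apply iSup_le
      intro q
      obtain ⟨qv, hqm⟩ := q
      rcases eq_or_ne qv p with hq | hq
      · subst hq
        have he : sylSub G ⟨qv, hqm⟩ = H := by
          show ((default : Sylow qv G) : Subgroup G) = (P : Subgroup G)
          rw [Subsingleton.elim (default : Sylow qv G) P]
        rw [he]
        exact le_sup_left
      · exact le_trans
          (le_iSup (fun i : {q : (Nat.card G).primeFactors // (q : ℕ) ≠ p} => sylSub G i.1)
            ⟨⟨qv, hqm⟩, hq⟩) le_sup_right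
    have hcommHK : ∀ a ∈ H, ∀ b ∈ K, Commute a b :=
      fun a ha b hb =>
        Subgroup.commute_of_normal_of_disjoint H K inferInstance inferInstance hdisj' a b ha hb
    -- every automorphism of `H` extends to `G`
    have hext : ∀ β : MulAut H, ∃ αe : MulAut G, ∀ h : H, αe (h : G) = (β h : G) := by
      intro β
      set φHK : H × K →* G := MonoidHom.noncommCoprod H.subtype K.subtype
        (fun a b => hcommHK a a.2 b b.2) with hφHK
      have happ : ∀ hk : H × K, φHK hk = (hk.1 : G) * (hk.2 : G) := fun hk => rfl
      have hinj : Function.Injective φHK := by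
        rintro ⟨⟨a1, ha1⟩, ⟨a2, ha2⟩⟩ ⟨⟨b1, hb1⟩, ⟨b2, hb2⟩⟩ hab
        rw [happ, happ] at hab
        simp only at hab
        have key : b1⁻¹ * a1 ∈ H ⊓ K := by
          constructor
          · exact H.mul_mem (H.inv_mem hb1) ha1
          · have h8 : b1⁻¹ * a1 = b2 * a2⁻¹ := by
              rw [show a1 = b1 * b2 * a2⁻¹ by rw [← hab]; group]
              group
            rw [h8]
            exact K.mul_mem hb2 (K.inv_mem ha2)
        rw [hdisj, Subgroup.mem_bot, inv_mul_eq_one] at key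
        subst key
        have h9 : a2 = b2 := by
          have := mul_left_cancel hab
          exact this
        subst h9
        rfl
      have hsurj : Function.Surjective φHK := by
        intro x
        have hx2 : x ∈ ((H : Set G) * (K : Set G)) := by
          rw [← Subgroup.mul_normal H K]
          show x ∈ (H ⊔ K : Subgroup G)
          rw [hsupHK]
          trivial
        obtain ⟨h, hh, k, hk, rfl⟩ := hx2
        exact ⟨(⟨h, hh⟩, ⟨k, hk⟩), rfl⟩
      set e := MulEquiv.ofBijective φHK ⟨hinj, hsurj⟩ with he
      refine ⟨e.symm.trans ((β.prodCongr (MulEquiv.refl K)).trans e), ?_⟩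
      intro h
      have h9 : e (h, 1) = (h : G) := by
        show φHK (h, 1) = _
        rw [happ]
        simp
      have h10 : e.symm ((h : G)) = (h, 1) := by rw [MulEquiv.symm_apply_eq, h9]
      show e ((β.prodCongr (MulEquiv.refl K)) (e.symm (h : G))) = _
      rw [h10]
      show e (β h, 1) = _
      show φHK (β h, 1) = _
      rw [happ]
      simp
    -- Engel condition for automorphisms of `H`
    have hEngel : ∀ β : MulAut H, ∀ x : H, (fun y : H => y⁻¹ * β y)^[n] x = 1 := by
      intro β x
      obtain ⟨αe, hαe⟩ := hext β
      have hchain : ∀ (k : ℕ) (x : H),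
          (((fun y : H => y⁻¹ * β y)^[k] x : H) : G) =
            (List.replicate k αe).foldl autoComm (x : G) := by
        intro k
        induction k with
        | zero => intro x; simp
        | succ k ih =>
          intro x
          rw [Function.iterate_succ_apply, List.replicate_succ, List.foldl_cons, ih]
          congr 1
          show ((x⁻¹ * β x : H) : G) = autoComm (x : G) αe
          rw [autoComm, hαe x]
          push_cast
          rfl
      have h11 := hn (x : G) (List.replicate n αe) (by simp)
      have h12 := hchain n x
      rw [h11] at h12
      exact Subtype.ext (by simpa using h12)
    -- every automorphism of `H` has `p`-power order
    intro α
    have hordpos : 0 < orderOf α := orderOf_pos α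
    have hpp : ∀ q0, q0.Prime → q0 ∣ orderOf α → q0 = p := by
      intro q0 hq0 hq0dvd
      by_contra hne
      set β := α ^ (orderOf α / q0) with hβ
      have hβq : β ^ q0 = 1 := by
        rw [hβ, ← pow_mul, Nat.div_mul_cancel hq0dvd, pow_orderOf_eq_one]
      have hβ1 : β = 1 :=
        engel_pGroup (Nat.card H) H le_rfl p q0 hp hq0 hne P.isPGroup' β n hβq (hEngel β)
      have hdvd : orderOf α ∣ orderOf α / q0 := orderOf_dvd_of_pow_eq_one (hβ ▸ hβ1)
      have hlt : orderOf α / q0 < orderOf α := Nat.div_lt_self hordpos hq0.one_lt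
      have hqpos : 0 < orderOf α / q0 :=
        Nat.div_pos (Nat.le_of_dvd hordpos hq0dvd) hq0.pos
      exact absurd (Nat.le_of_dvd hqpos hdvd) (not_le.mpr hlt)
    refine ⟨(orderOf α).factorization p, ?_⟩
    have hcompl : ordCompl[p] (orderOf α) = 1 := by
      by_contra hc
      obtain ⟨q0, hq0, hq0d⟩ := Nat.exists_prime_and_dvd hc
      have hq0o : q0 ∣ orderOf α := hq0d.trans (Nat.ordCompl_dvd _ _)
      have hq0p := hpp q0 hq0 hq0o
      subst hq0p
      exact Nat.not_dvd_ordCompl hp hordpos.ne' hq0d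
    have hord : p ^ (orderOf α).factorization p = orderOf α := by
      have h13 := Nat.ordProj_mul_ordCompl_eq_self (orderOf α) p
      rw [hcompl, mul_one] at h13
      exact h13
    rw [hord, pow_orderOf_eq_one]
  · rintro ⟨hnil, hAut⟩
    have hnormal : ∀ (p : ℕ), Fact p.Prime → ∀ P : Sylow p G, (P : Subgroup G).Normal := by
      have h0 := (isNilpotent_of_finite_tfae (G := G)).out 0 3
      intro p hp P
      exact (h0.mp hnil) p hp P
    haveI hchar : ∀ q, (sylSub G q).Characteristic := sylSub_characteristic G hnormal
    have hdies : ∀ q : (Nat.card G).primeFactors, ∃ mq : ℕ,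
        ∀ (y : sylSub G q) (l : List (MulAut (sylSub G q))), l.length = mq →
          l.foldl autoComm y = 1 := by
      intro q
      haveI := Fact.mk (Nat.prime_of_mem_primeFactors q.2)
      haveI : Finite (Hol (sylSub G q)) := hol_finite _
      have hpH : IsPGroup q.1 (sylSub G q) := (default : Sylow q.1 G).isPGroup'
      have hpA : IsPGroup q.1 (MulAut (sylSub G q)) :=
        hAut q.1 (Nat.prime_of_mem_primeFactors q.2) (Nat.dvd_of_mem_primeFactors q.2) default
      have hnilH : Group.IsNilpotent (Hol (sylSub G q)) :=
        (hol_isPGroup _ hpH hpA).isNilpotent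
      exact hol_dies _ hnilH
    choose m hm using hdies
    refine ⟨Finset.univ.sup m, ?_⟩
    intro x l hl
    have hcommPS := sylow_pairwise_commute G hnormal
    have hx : x ∈ (Subgroup.noncommPiCoprod hcommPS).range := by
      rw [Subgroup.noncommPiCoprod_range, sylow_iSup_eq_top G]
      trivial
    obtain ⟨u, hu⟩ := hx
    rw [← hu, Subgroup.noncommPiCoprod_apply]
    refine dies_noncommProd (Finset.univ.sup m) (sylSub G)
      (fun i j hij a ha b hb => hcommPS hij a b ha hb)
      (fun q => (u q : G)) (fun q => (u q).2) ?_ Finset.univ _ l hl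
    intro q
    exact dies_of_le (Finset.le_sup (Finset.mem_univ q))
      (dies_of_subgroup _ (m q) (hm q) (u q).2)
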